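/- Each entry of the matrix M_Φ of the map Φ(v_0 ⊗ u) = Σ_{k=0}^{m} (-1)^k q^{2km - k(k+1)} s^{-k(n-1)} v_k ⊗ E^k u, expressed in the rescaled bases {v_{i(e)}} of V'_{n,m} and {v_e} of V_{n,m}, lies in ℤ[q, q^{-1}], i.e. involves no positive or negative power of s. -/

import Mathlib

open Finset LaurentPolynomial

noncomputable section

/-- The ring `ℤ[q^{±1}][s^{±1}]`: Laurent polynomials in `s` over `ℤ[q^{±1}]`. -/
abbrev LQS : Type := LaurentPolynomial (LaurentPolynomial ℤ)

/-- The variable `s`. -/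
def Sv : LQS := T 1

/-- The power `q^z`, as an element of `ℤ[q^{±1}][s^{±1}]`. -/
def Qp (z : ℤ) : LQS := LaurentPolynomial.C (T z)

/-- The `n`-fold tensor power `V^{⊗n}` of the generic Verma module, modelled as the free
`ℤ[q^{±1},s^{±1}]`-module on basis vectors `v_{e_1} ⊗ ⋯ ⊗ v_{e_n}` indexed by tuples
`e : Fin n → ℕ`. -/
abbrev TensorV (n : ℕ) : Type := (Fin n → ℕ) →₀ LQS

/-- The action of `E` on `V^{⊗n}` through the iterated coproduct
`Δ^{(n)}(E) = Σ_{i=1}^{n} 1^{⊗(i-1)} ⊗ E ⊗ K^{⊗(n-i)}`, where on each single factor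
`E v_j = v_{j-1}` (`E v_0 = 0`) and `K v_j = s q^{-2j} v_j`. -/
def Eact (n : ℕ) (v : TensorV n) : TensorV n :=
  v.sum fun e c =>
    ∑ i ∈ Finset.univ.filter (fun i : Fin n => 1 ≤ e i),
      Finsupp.single (Function.update e i (e i - 1))
        (c * ∏ t ∈ Finset.univ.filter (fun t : Fin n => i < t),
          (Sv * Qp (-2 * (e t : ℤ))))

/-- The map `Φ(v_0 ⊗ u) = Σ_{k=0}^{m} (-1)^k q^{2km - k(k+1)} s^{-k(n-1)} v_k ⊗ E^k u`
from `V'_{n,m} = L v_0 ⊗ V^{⊗(n-1)}` to `V^{⊗n}` (here with `n` replaced by `n+1`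
total tensor factors, so the input has `n` factors and `s`-exponent `-k·n`). -/
def Phi (n m : ℕ) (u : TensorV n) : TensorV (n + 1) :=
  ∑ k ∈ Finset.range (m + 1),
    ((-1 : LQS) ^ k * Qp (2 * (k : ℤ) * m - k * (k + 1)) * T (-(k : ℤ) * n)) •
      Finsupp.mapDomain (fun e => Fin.cons k e) ((Eact n)^[k] u)

/-- weight -/
def Wt {n : ℕ} (f : Fin n → ℕ) : ℤ := ∑ t : Fin n, (((t : ℕ) : ℤ) + 2) * f t

lemma exCT_sum {ι : Type*} (s : Finset ι) (g : ι → LQS) (a : ℤ)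
    (h : ∀ i ∈ s, ∃ p, g i = C p * T a) :
    ∃ p, ∑ i ∈ s, g i = C p * T a := by
  classical
  induction s using Finset.induction with
  | empty => exact ⟨0, by simp⟩
  | @insert x s' hx ih =>
    obtain ⟨p1, hp1⟩ := h x (mem_insert_self _ _)
    obtain ⟨p2, hp2⟩ := ih fun i hi => h i (mem_insert_of_mem hi)
    exact ⟨p1 + p2, by rw [Finset.sum_insert hx, hp1, hp2, map_add, add_mul]⟩

lemma Wt_update {n : ℕ} (e : Fin n → ℕ) (i : Fin n) (b : ℕ) :
    Wt (Function.update e i b) = Wt e + (((i : ℕ) : ℤ) + 2) * b - (((i : ℕ) : ℤ) + 2) * e i := by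
  unfold Wt
  have h1 : ∀ t : Fin n, (((t : ℕ) : ℤ) + 2) * ((Function.update e i b t : ℕ) : ℤ) =
      Function.update (fun t : Fin n => (((t : ℕ) : ℤ) + 2) * (e t : ℤ)) i
        ((((i : ℕ) : ℤ) + 2) * b) t := by
    intro t
    rcases eq_or_ne t i with rfl | h
    · simp
    · simp [Function.update_of_ne h]
  rw [Finset.sum_congr rfl fun t _ => h1 t,
    Finset.sum_update_of_mem (Finset.mem_univ i),
    Finset.sum_eq_add_sum_sdiff_singleton_of_mem (Finset.mem_univ i)
      (fun t : Fin n => (((t : ℕ) : ℤ) + 2) * (e t : ℤ))]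
  ring

lemma Eact_good {n : ℕ} (v : TensorV n) (c : ℤ)
    (hv : ∀ f, ∃ p, v f = C p * T (Wt f + c)) :
    ∀ f, ∃ p, (Eact n v) f = C p * T (Wt f + (c + (n + 1))) := by
  classical
  intro f
  rw [Eact, Finsupp.sum_apply, Finsupp.sum]
  apply exCT_sum
  intro e _
  rw [Finsupp.finset_sum_apply]
  apply exCT_sum
  intro i hi
  rw [Finset.mem_filter] at hi
  rw [Finsupp.single_apply]
  split_ifs with hef
  · obtain ⟨p, hp⟩ := hv e
    -- the product
    have hIoi : Finset.univ.filter (fun t : Fin n => i < t) = Finset.Ioi i := by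
      ext t; simp
    have hcard : ((Finset.univ.filter (fun t : Fin n => i < t)).card : ℤ)
        = (n : ℤ) - 1 - (i : ℕ) := by
      rw [hIoi, Fin.card_Ioi]
      have := i.isLt; omega
    set S := Finset.univ.filter (fun t : Fin n => i < t) with hS
    have hprod : ∏ t ∈ S, (Sv * Qp (-2 * (e t : ℤ)))
        = C (∏ t ∈ S, T (-2 * (e t : ℤ))) * T ((S.card : ℤ)) := by
      rw [Finset.prod_mul_distrib]
      rw [show (∏ _t ∈ S, Sv) = T ((S.card : ℤ)) by
        rw [Finset.prod_const, Sv, T_pow, mul_one]]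
      rw [show (∏ t ∈ S, Qp (-2 * (e t : ℤ))) = C (∏ t ∈ S, T (-2 * (e t : ℤ))) from
        (map_prod (LaurentPolynomial.C (R := LaurentPolynomial ℤ)) (fun t => T (-2 * (e t : ℤ))) S).symm]
      ring
    have hWf : Wt f = Wt e - (((i : ℕ) : ℤ) + 2) := by
      rw [← hef, Wt_update]
      have : ((e i - 1 : ℕ) : ℤ) = (e i : ℤ) - 1 := by
        have := hi.2; omega
      rw [this]; ring
    refine ⟨p * ∏ t ∈ S, T (-2 * (e t : ℤ)), ?_⟩
    rw [hp, hprod, map_mul]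
    rw [mul_mul_mul_comm, ← T_add]
    congr 2
    rw [hcard, hWf]; ring
  · exact ⟨0, by simp⟩

lemma Eact_iter_good {n : ℕ} (e : Fin n → ℕ) (k : ℕ) :
    ∀ f, ∃ p, ((Eact n)^[k] (Finsupp.single e (T (Wt e)))) f
      = C p * T (Wt f + k * ((n : ℤ) + 1)) := by
  induction k with
  | zero =>
    intro f
    simp only [Function.iterate_zero, id_eq, Finsupp.single_apply]
    split_ifs with h
    · exact ⟨1, by rw [map_one, one_mul, h]; norm_num⟩
    · exact ⟨0, by simp⟩
  | succ k ih =>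
    intro f
    rw [Function.iterate_succ_apply']
    obtain ⟨p, hp⟩ := Eact_good _ (k * ((n : ℤ) + 1)) ih f
    refine ⟨p, ?_⟩
    rw [hp]
    congr 2
    push_cast
    ring

/-- each entry of the matrix `M_Φ` of `Φ`, expressed with respect to the
rescaled bases `v_{i(e)} = s^{Σ_{t=1}^{n+1} t·(i(e))_t} v_0 ⊗ v_{e_1} ⊗ ⋯ ⊗ v_{e_n}`
(for `e ∈ E_{n+1,m}`, `i(e) = (0,e)`) of `V'` and `v_{e'} = s^{Σ t·e'_t} v_{e'_1} ⊗ ⋯`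
of `V`, lies in `ℤ[q,q^{-1}]`: the coefficient of `Φ(v_{i(e)})` on the rescaled basis
vector `v_{e'}` involves no power of the variable `s`. -/
theorem Phi_matrix_entries_no_s (n m : ℕ) (e : Fin n → ℕ) (he : ∑ t, e t = m)
    (e' : Fin (n + 1) → ℕ) :
    ∃ p : LaurentPolynomial ℤ,
      (Phi n m (Finsupp.single e (T (∑ t : Fin n, (((t : ℕ) : ℤ) + 2) * e t)))) e' =
        LaurentPolynomial.C p * T (∑ t : Fin (n + 1), (((t : ℕ) : ℤ) + 1) * e' t) := by
  classical
  have hu : (Finsupp.single e (T (∑ t : Fin n, (((t : ℕ) : ℤ) + 2) * e t)) : TensorV n)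
      = Finsupp.single e (T (Wt e)) := rfl
  rw [hu]
  unfold Phi
  rw [Finsupp.finset_sum_apply]
  have htail : (∑ t : Fin (n + 1), (((t : ℕ) : ℤ) + 1) * e' t)
      = Wt (Fin.tail e') + (e' 0 : ℤ) := by
    rw [Fin.sum_univ_succ]
    have h0 : ((((0 : Fin (n + 1)) : ℕ) : ℤ) + 1) * (e' 0 : ℤ) = (e' 0 : ℤ) := by norm_num
    have hsum : (∑ x : Fin n, ((((Fin.succ x : Fin (n + 1)) : ℕ) : ℤ) + 1) * (e' (Fin.succ x) : ℤ))
        = ∑ t : Fin n, (((t : ℕ) : ℤ) + 2) * ((Fin.tail e') t : ℤ) := by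
      apply Finset.sum_congr rfl
      intro x _
      simp only [Fin.val_succ, Fin.tail]
      push_cast
      ring
    rw [h0, hsum, Wt]
    ring
  by_cases hm : e' 0 ≤ m
  · rw [Finset.sum_eq_single (e' 0)]
    · rw [Finsupp.smul_apply, smul_eq_mul]
      obtain ⟨p, hp⟩ := Eact_iter_good e (e' 0) (Fin.tail e')
      have he' : e' = Fin.cons (e' 0) (Fin.tail e') := (Fin.cons_self_tail e').symm
      rw [show ((Finsupp.mapDomain (fun g => Fin.cons (e' 0) g)
            ((Eact n)^[e' 0] (Finsupp.single e (T (Wt e))))) e')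
          = ((Eact n)^[e' 0] (Finsupp.single e (T (Wt e)))) (Fin.tail e') by
        conv_lhs => rw [he']
        exact Finsupp.mapDomain_apply (Fin.cons_right_injective _) _ _]
      rw [hp, htail]
      refine ⟨(-1) ^ (e' 0) * T (2 * (e' 0 : ℤ) * m - e' 0 * (e' 0 + 1)) * p, ?_⟩
      have hneg : ((-1 : LQS)) ^ (e' 0) = C ((-1 : LaurentPolynomial ℤ) ^ (e' 0)) := by
        rw [map_pow, map_neg, map_one]
      have hexp : (-(e' 0 : ℤ) * n) + (Wt (Fin.tail e') + (e' 0 : ℤ) * ((n : ℤ) + 1))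
          = Wt (Fin.tail e') + (e' 0 : ℤ) := by ring
      calc ((-1 : LQS)) ^ (e' 0) * Qp (2 * ((e' 0 : ℕ) : ℤ) * m - (e' 0) * ((e' 0) + 1))
            * T (-((e' 0 : ℕ) : ℤ) * n) * (C p * T (Wt (Fin.tail e') + (e' 0) * ((n : ℤ) + 1)))
          = C ((-1) ^ (e' 0) * T (2 * (e' 0 : ℤ) * m - e' 0 * (e' 0 + 1)) * p)
            * T ((-(e' 0 : ℤ) * n) + (Wt (Fin.tail e') + (e' 0 : ℤ) * ((n : ℤ) + 1))) := by
            conv_rhs => rw [T_add]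
            rw [hneg, Qp, map_mul, map_mul]
            ring
        _ = _ := by rw [hexp]
    · intro k _ hne
      have hz : (Finsupp.mapDomain (fun g => Fin.cons k g)
          ((Eact n)^[k] (Finsupp.single e (T (Wt e))))) e' = 0 := by
        apply Finsupp.mapDomain_notin_range
        rintro ⟨g, hg⟩
        apply hne
        have h0 : e' 0 = k := by rw [← hg]; simp
        exact h0.symm
      rw [Finsupp.smul_apply, hz, smul_zero]
    · intro h
      exact absurd (Finset.mem_range.mpr (Nat.lt_succ_of_le hm)) h
  · refine ⟨0, ?_⟩
    rw [map_zero, zero_mul]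
    apply Finset.sum_eq_zero
    intro k hk
    have hz : (Finsupp.mapDomain (fun g => Fin.cons k g)
        ((Eact n)^[k] (Finsupp.single e (T (Wt e))))) e' = 0 := by
      apply Finsupp.mapDomain_notin_range
      rintro ⟨g, hg⟩
      have h0 : e' 0 = k := by rw [← hg]; simp
      rw [Finset.mem_range] at hk
      omega
    rw [Finsupp.smul_apply, hz, smul_zero]

end
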